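/- A Halin graph G is 3-colorable if and only if G does not contain any odd wheel W_{2k+2} (k ≥ 1) as a subgraph. -/

import Mathlib

open SimpleGraph

/-- `IsHalinFrom T G` : `G` is the Halin graph obtained from the tree `T`
(a tree with no degree-2 vertices) by joining its `r ≥ 3` leaves
`l 0, l 1, …, l (r-1)` in a cycle. -/
def IsHalinFrom {V : Type*} [Fintype V] (T G : SimpleGraph V) : Prop :=
  T.Connected ∧ T.IsAcyclic ∧ (∀ v : V, (T.neighborSet v).ncard ≠ 2) ∧
    ∃ (r : ℕ) (l : Fin r ↪ V), 3 ≤ r ∧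
      Set.range l = {v : V | (T.neighborSet v).ncard = 1} ∧
      G = T ⊔ (SimpleGraph.cycleGraph r).map l

/-- `G` is a Halin graph. -/
def IsHalin {V : Type*} [Fintype V] (G : SimpleGraph V) : Prop :=
  ∃ T : SimpleGraph V, IsHalinFrom T G

/-- The wheel graph `W_{n+1}` on `Fin (n+1)` : the cycle `C_n` on the first `n`
vertices together with the hub `Fin.last n` adjacent to all cycle vertices. -/
def wheel (n : ℕ) : SimpleGraph (Fin (n + 1)) :=
  (SimpleGraph.cycleGraph n).map Fin.castSuccEmb ⊔
    SimpleGraph.fromRel (fun u _ => u = Fin.last n)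

/-- `G` contains `H` as a subgraph (via an injective embedding of vertices). -/
def ContainsSubgraph {W V : Type*} (G : SimpleGraph V) (H : SimpleGraph W) : Prop :=
  ∃ f : W → V, Function.Injective f ∧ ∀ u v : W, H.Adj u v → G.Adj (f u) (f v)

/-- choose a color different from two given colors -/
def pick3 (a b : Fin 3) : Fin 3 :=
  if 0 ≠ a ∧ 0 ≠ b then 0 else if 1 ≠ a ∧ 1 ≠ b then 1 else 2

lemma pick3_spec : ∀ a b : Fin 3, pick3 a b ≠ a ∧ pick3 a b ≠ b := by decide

lemma fin3_forced (x y z a : Fin 3) (hx : x ≠ a) (hy : y ≠ a) (hz : z ≠ a)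
    (hyx : y ≠ x) (hzy : z ≠ y) : z = x := by
  have h : ∀ x y z a : Fin 3, ¬(x ≠ a ∧ y ≠ a ∧ z ≠ a ∧ y ≠ x ∧ z ≠ y ∧ z ≠ x) := by decide
  by_contra hzx
  exact h x y z a ⟨hx, hy, hz, hyx, hzy, hzx⟩

lemma cycle_adj_succ {r : ℕ} [NeZero r] (hr : 3 ≤ r) (i : Fin r) :
    (SimpleGraph.cycleGraph r).Adj i (i + 1) := by
  rw [cycleGraph_adj']
  right
  rw [add_sub_cancel_left, Fin.val_one', Nat.mod_eq_of_lt (by omega)]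

lemma cycle_adj_consec {r : ℕ} [NeZero r] (hr : 3 ≤ r) {i j : Fin r}
    (h : (SimpleGraph.cycleGraph r).Adj i j) : j = i + 1 ∨ i = j + 1 := by
  rw [cycleGraph_adj'] at h
  have h1 : (1 : Fin r).val = 1 := by rw [Fin.val_one', Nat.mod_eq_of_lt (by omega)]
  rcases h with h | h
  · right
    have h2 : i - j = 1 := Fin.ext (by rw [h1]; exact h)
    rw [sub_eq_iff_eq_add] at h2
    exact h2.trans (add_comm 1 j)
  · left
    have h2 : j - i = 1 := Fin.ext (by rw [h1]; exact h)
    rw [sub_eq_iff_eq_add] at h2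
    exact h2.trans (add_comm 1 i)

open Fin.NatCast in
/-- greedy descending coloring of the cycle, starting at `i0`. -/
def descAux {r : ℕ} [NeZero r] (F : Fin r → Fin 3) (i0 : Fin r) : ℕ → Fin 3
  | 0 => F (i0 + 1)
  | (k + 1) => pick3 (descAux F i0 k) (F (i0 - ((k + 1 : ℕ) : Fin r)))

open Fin.NatCast in
lemma cycle_coloring {r : ℕ} (hr : 3 ≤ r) (F : Fin r → Fin 3)
    (h : (∃ i j, F i ≠ F j) ∨ Even r) :
    ∃ f : Fin r → Fin 3, (∀ i, f i ≠ F i) ∧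
      ∀ i j, (SimpleGraph.cycleGraph r).Adj i j → f i ≠ f j := by
  haveI : NeZero r := ⟨by omega⟩
  obtain ⟨s, rfl⟩ : ∃ s, r = s + 3 := ⟨r - 3, by omega⟩
  suffices hsuff : ∃ f : Fin (s + 3) → Fin 3, (∀ i, f i ≠ F i) ∧ ∀ i, f i ≠ f (i + 1) by
    obtain ⟨f, h1, h2⟩ := hsuff
    refine ⟨f, h1, fun i j hadj => ?_⟩
    rcases cycle_adj_consec (by omega) hadj with rfl | rfl
    · exact h2 i
    · exact (h2 j).symm
  by_cases hex : ∃ i, F i ≠ F (i + 1)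
  · obtain ⟨i0, hi0⟩ := hex
    set f : Fin (s + 3) → Fin 3 := fun i => descAux F i0 ((i0 - i).val) with hf
    have hfi0 : f i0 = F (i0 + 1) := by
      rw [hf]; simp only [sub_self, Fin.val_zero]; rfl
    have hfne : ∀ i : Fin (s + 3), i ≠ i0 → ∃ m, (i0 - i).val = m + 1 := by
      intro i hi
      have hsub : i0 - i ≠ 0 := sub_ne_zero_of_ne (Ne.symm hi)
      have hv : (i0 - i).val ≠ 0 := fun hv => hsub (Fin.ext (by simp [hv]))
      exact ⟨(i0 - i).val - 1, by omega⟩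
    have hstep : ∀ (i : Fin (s + 3)) (m : ℕ), (i0 - i).val = m + 1 →
        f i = pick3 (descAux F i0 m) (F i) := by
      intro i m hm
      have hcast : ((m + 1 : ℕ) : Fin (s + 3)) = i0 - i := by
        rw [← hm, Fin.cast_val_eq_self]
      have : f i = descAux F i0 (m + 1) := by rw [hf]; simp only [hm]
      rw [this]
      show pick3 (descAux F i0 m) (F (i0 - ((m + 1 : ℕ) : Fin (s + 3)))) = _
      rw [hcast, sub_sub_cancel]
    have hone : (1 : Fin (s + 3)).val = 1 := by
      rw [Fin.val_one', Nat.mod_eq_of_lt (by omega)]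
    have haddne : ∀ i : Fin (s + 3), i + 1 ≠ i := by
      intro i hcon
      have h2 := congrArg (· - i) hcon
      simp only [add_sub_cancel_left, sub_self] at h2
      have h3 := congrArg Fin.val h2
      rw [hone, Fin.val_zero] at h3
      omega
    refine ⟨f, ?_, ?_⟩
    · intro i
      by_cases hi : i = i0
      · rw [hi, hfi0]; exact Ne.symm hi0
      · obtain ⟨m, hm⟩ := hfne i hi
        rw [hstep i m hm]; exact (pick3_spec _ _).2
    · intro i
      by_cases hi : i = i0
      · rw [hi]
        have hwrap : (i0 - (i0 + 1)).val = (s + 1) + 1 := by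
          have h1 : i0 - (i0 + 1) = -1 := by
            rw [sub_add_eq_sub_sub, sub_self, zero_sub]
          rw [h1, Fin.coe_neg_one]
        rw [hfi0, hstep (i0 + 1) (s + 1) hwrap]
        exact Ne.symm ((pick3_spec _ _).2)
      · obtain ⟨m, hm⟩ := hfne i hi
        have hdec : (i0 - (i + 1)).val = m := by
          have h1 : i0 - (i + 1) = i0 - i - 1 := by rw [sub_add_eq_sub_sub]
          have h2 : i0 - i ≠ 0 := sub_ne_zero_of_ne (Ne.symm hi)
          rw [h1, Fin.coe_sub_one, if_neg h2, hm]
          omega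
        have hfip : f (i + 1) = descAux F i0 m := by rw [hf]; simp only [hdec]
        rw [hstep i m hm, hfip]
        exact (pick3_spec _ _).1
  · push_neg at hex
    have hconst : ∀ i, F i = F 0 := by
      have key : ∀ m (hm : m < s + 3), F ⟨m, hm⟩ = F 0 := by
        intro m
        induction m with
        | zero => intro hm; congr 1
        | succ m ih =>
          intro hm
          have hm' : m < s + 3 := by omega
          have hstep := hex ⟨m, hm'⟩
          have haddone : (⟨m, hm'⟩ : Fin (s + 3)) + 1 = ⟨m + 1, hm⟩ := by
            apply Fin.ext
            rw [Fin.val_add, Fin.val_one', Nat.mod_eq_of_lt (show 1 < s + 3 by omega),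
              Nat.mod_eq_of_lt hm]
          rw [haddone] at hstep
          rw [← hstep]
          exact ih hm'
      intro i
      have := key i.val i.isLt
      simpa using this
    have heven : Even (s + 3) := by
      rcases h with ⟨i, j, hij⟩ | he
      · exact absurd ((hconst i).trans (hconst j).symm) hij
      · exact he
    obtain ⟨t, ht⟩ := heven
    set a := pick3 (F 0) (F 0) with ha
    set b := pick3 (F 0) a with hb
    refine ⟨fun i => if Even i.val then a else b, fun i => ?_, fun i => ?_⟩
    · show (if Even i.val then a else b) ≠ F i
      rw [hconst i]
      by_cases hi : Even i.val
      · rw [if_pos hi]; exact (pick3_spec _ _).1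
      · rw [if_neg hi]; exact (pick3_spec _ _).1
    · have hba : b ≠ a := (pick3_spec _ _).2
      show (if Even i.val then a else b) ≠ if Even ((i + 1 : Fin (s + 3)).val) then a else b
      by_cases hlast : i = Fin.last (s + 2)
      · have h1 : i.val = s + 2 := by rw [hlast]; rfl
        have h2 : ((i + 1 : Fin (s + 3))).val = 0 := by
          rw [Fin.val_add, Fin.val_one', Nat.mod_eq_of_lt (show 1 < s + 3 by omega), h1]
          show (s + 3) % (s + 3) = 0
          exact Nat.mod_self _
        have hodd : ¬ Even (s + 2) := by rw [Nat.even_iff]; omega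
        rw [h1, h2, if_neg hodd, if_pos Even.zero]
        exact hba
      · have hlt : i < Fin.last (s + 2) := lt_of_le_of_ne (Fin.le_last i) hlast
        have h2 : (i + 1 : Fin (s + 3)).val = i.val + 1 := Fin.val_add_one_of_lt hlt
        rw [h2]
        by_cases hi : Even i.val
        · rw [if_pos hi, if_neg (by rw [Nat.even_iff] at hi ⊢; omega : ¬ Even (i.val + 1))]
          exact hba.symm
        · rw [if_neg hi, if_pos (by rw [Nat.even_iff] at hi ⊢; omega : Even (i.val + 1))]
          exact hba

lemma tree_adj_dist_parity {V : Type*} {T : SimpleGraph V} (hconn : T.Connected)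
    (hacyc : T.IsAcyclic) (root : V) {u v : V} (huv : T.Adj u v) :
    T.dist root u % 2 ≠ T.dist root v % 2 := by
  classical
  have hdvu : T.dist v u = 1 := dist_eq_one_iff_adj.mpr huv.symm
  have hduv : T.dist u v = 1 := dist_eq_one_iff_adj.mpr huv
  have h1 : T.dist root v ≤ T.dist root u + 1 := by
    have := hconn.dist_triangle (u := root) (v := u) (w := v)
    rwa [hduv] at this
  have h2 : T.dist root u ≤ T.dist root v + 1 := by
    have := hconn.dist_triangle (u := root) (v := v) (w := u)
    rwa [hdvu] at this
  have hne : T.dist root u ≠ T.dist root v := by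
    intro heq
    obtain ⟨P, hP⟩ := hconn.exists_walk_length_eq_dist root u
    obtain ⟨Q, hQ⟩ := hconn.exists_walk_length_eq_dist root v
    have hvP : v ∉ P.support := by
      intro hv
      have hsplit := congrArg Walk.length (P.take_spec hv)
      rw [Walk.length_append] at hsplit
      have ht1 : T.dist root v ≤ (P.takeUntil v hv).length := dist_le _
      have ht2 : T.dist v u ≤ (P.dropUntil v hv).length := dist_le _
      rw [hdvu] at ht2
      omega
    have hPp : P.IsPath := P.isPath_of_length_eq_dist hP
    have hQp : Q.IsPath := Q.isPath_of_length_eq_dist hQ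
    have hp1 : (Walk.cons huv.symm P.reverse).IsPath :=
      Walk.IsPath.cons hPp.reverse (by rwa [Walk.support_reverse, List.mem_reverse])
    have hpq := isAcyclic_iff_path_unique.mp hacyc
      ⟨Walk.cons huv.symm P.reverse, hp1⟩ ⟨Q.reverse, hQp.reverse⟩
    have hlen := congrArg (fun pp : T.Path v root => pp.1.length) hpq
    simp only [Walk.length_cons, Walk.length_reverse] at hlen
    omega
  omega

lemma colorable_of_contains {W V : Type*} {G : SimpleGraph V} {H : SimpleGraph W}
    (h : ContainsSubgraph G H) {n : ℕ} (hc : G.Colorable n) : H.Colorable n := by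
  obtain ⟨f, _, hadj⟩ := h
  obtain ⟨C⟩ := hc
  exact ⟨Coloring.mk (fun w => C (f w)) (fun hvw => C.valid (hadj _ _ hvw))⟩

lemma odd_not_two_colorable {r : ℕ} [NeZero r] (hr : 3 ≤ r) (ho : Odd r) (c : Fin r → Fin 3) (a : Fin 3)
    (hne : ∀ i, c i ≠ a) (hcons : ∀ i, c i ≠ c (i + 1)) : False := by
  obtain ⟨s, rfl⟩ : ∃ s, r = s + 3 := ⟨r - 3, by omega⟩
  have key : ∀ m (hm : m < s + 3),
      (Even m → c ⟨m, hm⟩ = c 0) ∧ (¬ Even m → c ⟨m, hm⟩ ≠ c 0) := by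
    intro m
    induction m with
    | zero =>
      intro hm
      refine ⟨fun _ => by congr 1, fun hodd => absurd Even.zero hodd⟩
    | succ m ih =>
      intro hm
      have hm' : m < s + 3 := by omega
      have hstep := hcons ⟨m, hm'⟩
      have haddone : (⟨m, hm'⟩ : Fin (s + 3)) + 1 = ⟨m + 1, hm⟩ := by
        apply Fin.ext
        rw [Fin.val_add, Fin.val_one', Nat.mod_eq_of_lt (show 1 < s + 3 by omega),
          Nat.mod_eq_of_lt hm]
      rw [haddone] at hstep
      constructor
      · intro heven
        have hoddm : ¬ Even m := by rw [Nat.even_iff] at heven ⊢; omega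
        have hmne := (ih hm').2 hoddm
        exact fin3_forced (c 0) (c ⟨m, hm'⟩) (c ⟨m + 1, hm⟩) a (hne 0) (hne _) (hne _)
          hmne (Ne.symm hstep)
      · intro hoddm1
        have hevenm : Even m := by rw [Nat.even_iff] at hoddm1 ⊢; omega
        have hmeq := (ih hm').1 hevenm
        rw [← hmeq]
        exact Ne.symm hstep
  have hevenlast : Even (s + 2) := by
    obtain ⟨t, ht⟩ := ho
    exact ⟨t, by omega⟩
  have hlast := (key (s + 2) (by omega)).1 hevenlast
  have hwrap := hcons ⟨s + 2, by omega⟩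
  have hzero : (⟨s + 2, by omega⟩ : Fin (s + 3)) + 1 = 0 := by
    apply Fin.ext
    rw [Fin.val_add, Fin.val_one', Nat.mod_eq_of_lt (show 1 < s + 3 by omega)]
    show (s + 3) % (s + 3) = 0
    exact Nat.mod_self _
  rw [hzero] at hwrap
  exact hwrap hlast

lemma wheel_not_colorable {k : ℕ} (hk : 1 ≤ k) : ¬ (wheel (2 * k + 1)).Colorable 3 := by
  rintro ⟨C⟩
  haveI : NeZero (2 * k + 1) := ⟨by omega⟩
  have hhub : ∀ i : Fin (2 * k + 1), C (Fin.castSucc i) ≠ C (Fin.last (2 * k + 1)) := by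
    intro i
    apply C.valid
    apply Or.inr
    rw [fromRel_adj]
    exact ⟨(Fin.castSucc_lt_last i).ne, Or.inr rfl⟩
  have hcons : ∀ i : Fin (2 * k + 1), C (Fin.castSucc i) ≠ C (Fin.castSucc (i + 1)) := by
    intro i
    apply C.valid
    apply Or.inl
    rw [SimpleGraph.map_adj]
    exact ⟨i, i + 1, cycle_adj_succ (by omega) i, rfl, rfl⟩
  exact odd_not_two_colorable (by omega) ⟨k, by omega⟩ (fun i => C (Fin.castSucc i))
    (C (Fin.last (2 * k + 1))) hhub hcons

lemma assemble {V : Type*} {r : ℕ} (hr : 3 ≤ r) (T : SimpleGraph V) (l : Fin r ↪ V)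
    (p : Fin r → V) (hp : ∀ i, T.neighborSet (l i) = {p i})
    (hpnl : ∀ i, p i ∉ Set.range ⇑l)
    (c : V → Fin 3) (hcT : ∀ {u v : V}, T.Adj u v → c u ≠ c v)
    (f : Fin r → Fin 3) (hf1 : ∀ i, f i ≠ c (p i))
    (hf2 : ∀ i j, (SimpleGraph.cycleGraph r).Adj i j → f i ≠ f j) :
    (T ⊔ (SimpleGraph.cycleGraph r).map l).Colorable 3 := by
  classical
  set C : V → Fin 3 := fun v => if h : ∃ i, l i = v then f h.choose else c v with hC
  have hCleaf : ∀ i, C (l i) = f i := by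
    intro i
    have hex : ∃ j, l j = l i := ⟨i, rfl⟩
    have hchoose : hex.choose = i := l.injective hex.choose_spec
    rw [hC]
    simp only [dif_pos hex, hchoose]
  have hCnon : ∀ v, v ∉ Set.range ⇑l → C v = c v := by
    intro v hv
    have hnex : ¬ ∃ i, l i = v := by rintro ⟨i, rfl⟩; exact hv ⟨i, rfl⟩
    rw [hC]
    simp only [dif_neg hnex]
  refine ⟨Coloring.mk C ?_⟩
  intro u v huv
  rw [sup_adj] at huv
  rcases huv with hT | hM
  · by_cases hu : ∃ i, l i = u <;> by_cases hv : ∃ j, l j = v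
    · obtain ⟨i, rfl⟩ := hu
      obtain ⟨j, rfl⟩ := hv
      exfalso
      have hmem : l j ∈ T.neighborSet (l i) := hT
      rw [hp i] at hmem
      exact hpnl i ⟨j, hmem⟩
    · obtain ⟨i, rfl⟩ := hu
      have hvpi : v = p i := by
        have hmem : v ∈ T.neighborSet (l i) := hT
        rwa [hp i] at hmem
      rw [hCleaf i, hCnon v (by rw [hvpi]; exact hpnl i), hvpi]
      exact hf1 i
    · obtain ⟨j, rfl⟩ := hv
      have hupj : u = p j := by
        have hmem : u ∈ T.neighborSet (l j) := hT.symm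
        rwa [hp j] at hmem
      rw [hCleaf j, hCnon u (by rw [hupj]; exact hpnl j), hupj]
      exact (hf1 j).symm
    · rw [hCnon u (fun hmem => hu (Set.mem_range.mp hmem)),
        hCnon v (fun hmem => hv (Set.mem_range.mp hmem))]
      exact hcT hT
  · rw [SimpleGraph.map_adj] at hM
    obtain ⟨i, j, hij, rfl, rfl⟩ := hM
    rw [hCleaf i, hCleaf j]
    exact hf2 i j hij

/-- A Halin graph is 3-colorable iff it contains no odd wheel `W_{2k+2}`
(`k ≥ 1`) as a subgraph. -/
theorem halin_three_colorable_iff_no_odd_wheel {V : Type*} [Fintype V]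
    (G : SimpleGraph V) (hG : IsHalin G) :
    G.Colorable 3 ↔ ¬ ∃ k : ℕ, 1 ≤ k ∧ ContainsSubgraph G (wheel (2 * k + 1)) := by
  classical
  constructor
  · rintro hcol ⟨k, hk, hcont⟩
    exact wheel_not_colorable hk (colorable_of_contains hcont hcol)
  · intro hno
    obtain ⟨T, hconn, hacyc, hdeg, r, l, hr3, hleaf, rfl⟩ := hG
    haveI : NeZero r := ⟨by omega⟩
    have hleafmem : ∀ i : Fin r, (T.neighborSet (l i)).ncard = 1 := by
      intro i
      have hmem : l i ∈ {v : V | (T.neighborSet v).ncard = 1} := by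
        rw [← hleaf]; exact Set.mem_range_self i
      exact hmem
    have hpar : ∀ i : Fin r, ∃ a, T.neighborSet (l i) = {a} :=
      fun i => Set.ncard_eq_one.mp (hleafmem i)
    choose p hp using hpar
    have hpadj : ∀ i, T.Adj (l i) (p i) := by
      intro i
      have hmem : p i ∈ T.neighborSet (l i) := by rw [hp i]; rfl
      exact hmem
    have hcard : 3 ≤ Fintype.card V := by
      have hle := Fintype.card_le_of_embedding l
      rw [Fintype.card_fin] at hle
      omega
    have hpnl : ∀ i, p i ∉ Set.range ⇑l := by
      intro i hmem
      obtain ⟨j, hj⟩ := hmem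
      have hadjij : T.Adj (l i) (l j) := by rw [hj]; exact hpadj i
      have hij : p j = l i := by
        have hmem2 : l i ∈ T.neighborSet (l j) := hadjij.symm
        rw [hp j] at hmem2
        exact hmem2.symm
      have key : ∀ (a w : V), T.Walk a w →
          a ∈ ({l i, l j} : Set V) → w ∈ ({l i, l j} : Set V) := by
        intro a w wk
        induction wk with
        | nil => exact id
        | @cons x y z hxy q ih =>
          intro hx
          apply ih
          rcases hx with hx | hx
          · have hmem3 : y ∈ T.neighborSet (l i) := by
              rw [← hx]; exact hxy
            rw [hp i] at hmem3
            right
            rw [hmem3, ← hj]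
            rfl
          · have hx' : x = l j := hx
            have hmem3 : y ∈ T.neighborSet (l j) := by
              rw [← hx']; exact hxy
            rw [hp j] at hmem3
            left
            rw [hmem3, hij]
      obtain ⟨x, hx⟩ : ∃ x : V, x ∉ ({l i, l j} : Set V) := by
        by_contra hall
        push_neg at hall
        have huniv : (Set.univ : Set V) ⊆ {l i, l j} := fun x _ => hall x
        have hle : (Set.univ : Set V).ncard ≤ ({l i, l j} : Set V).ncard :=
          Set.ncard_le_ncard huniv (Set.toFinite _)
        rw [Set.ncard_univ, Nat.card_eq_fintype_card] at hle
        have hpair : ({l i, l j} : Set V).ncard ≤ 2 :=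
          le_trans (Set.ncard_insert_le _ _) (by simp)
        omega
      obtain ⟨wk⟩ := hconn.preconnected (l i) x
      exact hx (key (l i) x wk (Set.mem_insert _ _))
    by_cases hstar : ∀ i j : Fin r, p i = p j
    · rcases Nat.even_or_odd r with heven | hodd
      · set c : V → Fin 3 := fun v => ⟨T.dist (p 0) v % 2, by omega⟩ with hc
        have hcT : ∀ {u v : V}, T.Adj u v → c u ≠ c v := by
          intro u v huv hcc
          exact tree_adj_dist_parity hconn hacyc (p 0) huv (congrArg Fin.val hcc)
        obtain ⟨f, hf1, hf2⟩ := cycle_coloring hr3 (fun i => c (p i)) (Or.inr heven)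
        exact assemble hr3 T l p hp hpnl c hcT f hf1 hf2
      · exfalso
        apply hno
        obtain ⟨k, hk⟩ := hodd
        have hk1 : 1 ≤ k := by omega
        subst hk
        set F : Fin (2 * k + 1 + 1) → V :=
          fun v => if h : v = Fin.last (2 * k + 1) then p 0 else l (v.castPred h) with hF
        have hFlast : F (Fin.last (2 * k + 1)) = p 0 := by rw [hF]; simp
        have hFcs : ∀ i : Fin (2 * k + 1), F (Fin.castSucc i) = l i := by
          intro i
          rw [hF]
          simp only [dif_neg (Fin.castSucc_lt_last i).ne]
          congr 1
        refine ⟨k, hk1, F, ?_, ?_⟩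
        · intro u v huv
          rcases Fin.eq_castSucc_or_eq_last u with ⟨a, rfl⟩ | rfl <;>
            rcases Fin.eq_castSucc_or_eq_last v with ⟨b, rfl⟩ | rfl
          · rw [hFcs, hFcs] at huv
            rw [l.injective huv]
          · rw [hFcs, hFlast] at huv
            exact absurd ⟨a, huv⟩ (hpnl 0)
          · rw [hFlast, hFcs] at huv
            exact absurd ⟨b, huv.symm⟩ (hpnl 0)
          · rfl
        · intro u v huv
          have huv' : ((SimpleGraph.cycleGraph (2 * k + 1)).map Fin.castSuccEmb).Adj u v ∨
              (SimpleGraph.fromRel (fun u _ => u = Fin.last (2 * k + 1))).Adj u v := huv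
          rcases huv' with hmap | hrel
          · rw [SimpleGraph.map_adj] at hmap
            obtain ⟨a, b, hab, ha, hb⟩ := hmap
            have ha' : u = Fin.castSucc a := ha.symm
            have hb' : v = Fin.castSucc b := hb.symm
            rw [ha', hb', hFcs, hFcs]
            exact Or.inr (by rw [SimpleGraph.map_adj]; exact ⟨a, b, hab, rfl, rfl⟩)
          · rw [fromRel_adj] at hrel
            obtain ⟨hne, hor⟩ := hrel
            rcases hor with rfl | rfl
            · rcases Fin.eq_castSucc_or_eq_last v with ⟨b, rfl⟩ | rfl
              · rw [hFlast, hFcs]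
                refine Or.inl ?_
                rw [← hstar b 0]
                exact (hpadj b).symm
              · exact absurd rfl hne
            · rcases Fin.eq_castSucc_or_eq_last u with ⟨a, rfl⟩ | rfl
              · rw [hFlast, hFcs]
                refine Or.inl ?_
                rw [← hstar a 0]
                exact hpadj a
              · exact absurd rfl hne
    · push_neg at hstar
      obtain ⟨i1, i2, h12⟩ := hstar
      set c0 : V → Fin 3 := fun v => ⟨T.dist (p i1) v % 2, by omega⟩ with hc0
      have hc0T : ∀ {u v : V}, T.Adj u v → c0 u ≠ c0 v := by
        intro u v huv hcc
        exact tree_adj_dist_parity hconn hacyc (p i1) huv (congrArg Fin.val hcc)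
      have hc0le : ∀ v, (c0 v).val ≤ 1 := by
        intro v
        show T.dist (p i1) v % 2 ≤ 1
        omega
      by_cases hcc : c0 (p i2) = c0 (p i1)
      · set c : V → Fin 3 := fun v => if v = p i2 then 2 else c0 v with hc
        have hcval : ∀ v, v ≠ p i2 → c v = c0 v := by
          intro v hv
          rw [hc]
          simp only [if_neg hv]
        have hcq2 : c (p i2) = 2 := by rw [hc]; simp
        have hcT : ∀ {u v : V}, T.Adj u v → c u ≠ c v := by
          intro u v huv
          by_cases hu : u = p i2 <;> by_cases hv : v = p i2
          · exact absurd (hu.trans hv.symm) huv.ne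
          · rw [hu, hcq2, hcval v hv]
            intro hcon
            have := hc0le v
            rw [← hcon] at this
            simp at this
          · rw [hv, hcq2, hcval u hu]
            intro hcon
            have := hc0le u
            rw [hcon] at this
            simp at this
          · rw [hcval u hu, hcval v hv]
            exact hc0T huv
        have hqq : c (p i1) ≠ c (p i2) := by
          rw [hcq2, hcval (p i1) (fun h => h12 h)]
          intro hcon
          have := hc0le (p i1)
          rw [hcon] at this
          simp at this
        obtain ⟨f, hf1, hf2⟩ := cycle_coloring hr3 (fun i => c (p i)) (Or.inl ⟨i1, i2, hqq⟩)
        exact assemble hr3 T l p hp hpnl c hcT f hf1 hf2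
      · obtain ⟨f, hf1, hf2⟩ := cycle_coloring hr3 (fun i => c0 (p i))
          (Or.inl ⟨i1, i2, fun h => hcc h.symm⟩)
        exact assemble hr3 T l p hp hpnl c0 hc0T f hf1 hf2
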